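/- For the histogramming kernel applied to a sample x_1,…,x_n, the empirical effective degrees of freedom ν̂ = (1/n) ∑_{i=1}^n ∫ K(x_i,y)²/f̂(y) dy − 1 equals m̂ − 1, where m̂ is the number of non-empty bins and f̂(y) = (1/n) ∑_{i=1}^n K(x_i,y). -/

import Mathlib

open MeasureTheory

/-- Histogramming kernel `K(x,y) = ∑_j 1{x ∈ B_j} 1{y ∈ B_j} / h_j` with bins
`B_j = [e j, e (j+1))`. -/
noncomputable def histKernel (m : ℕ) (e : ℕ → ℝ) (x y : ℝ) : ℝ :=
  ∑ j ∈ Finset.range m,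
    if x ∈ Set.Ico (e j) (e (j + 1)) ∧ y ∈ Set.Ico (e j) (e (j + 1)) then
      (e (j + 1) - e j)⁻¹ else 0

theorem histogram_empirical_edof (a b : ℝ) (m : ℕ) (hm : 0 < m) (e : ℕ → ℝ)
    (ha : e 0 = a) (hb : e m = b) (hmono : ∀ j < m, e j < e (j + 1))
    (n : ℕ) (hn : 0 < n) (x : Fin n → ℝ) (hx : ∀ i, x i ∈ Set.Ico a b) :
    (1 / (n : ℝ)) * (∑ i, ∫ y : ℝ,
        (histKernel m e (x i) y) ^ 2
          / ((1 / (n : ℝ)) * ∑ i', histKernel m e (x i') y)) - 1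
      = (((Finset.range m).filter
          (fun j => ∃ i, x i ∈ Set.Ico (e j) (e (j + 1)))).card : ℝ) - 1 := by
  classical
  -- monotonicity
  have hmono' : ∀ j k, j ≤ k → k ≤ m → e j ≤ e k := by
    intro j k hjk hkm
    induction k with
    | zero => interval_cases j; rfl
    | succ k ih =>
      rcases Nat.lt_or_ge j (k + 1) with h | h
      · have h1 : e j ≤ e k := ih (Nat.lt_succ_iff.mp h) (Nat.le_of_succ_le hkm)
        exact h1.trans (le_of_lt (hmono k (Nat.lt_of_succ_le hkm)))
      · have : j = k + 1 := le_antisymm hjk h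
        rw [this]
  -- disjointness of bins
  have hdisj : ∀ (y : ℝ) j j', j < m → j' < m →
      y ∈ Set.Ico (e j) (e (j + 1)) → y ∈ Set.Ico (e j') (e (j' + 1)) → j = j' := by
    intro y j j' hj hj' hyj hyj'
    by_contra hne
    rcases Nat.lt_or_ge j j' with h | h
    · have h1 : e (j + 1) ≤ e j' := hmono' _ _ h (le_of_lt hj')
      exact absurd (hyj.2.trans_le (h1.trans hyj'.1)) (lt_irrefl y)
    · have h2 : j' < j := lt_of_le_of_ne h (Ne.symm hne)
      have h1 : e (j' + 1) ≤ e j := hmono' _ _ h2 (le_of_lt hj)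
      exact absurd (hyj'.2.trans_le (h1.trans hyj.1)) (lt_irrefl y)
  -- existence of a bin
  have hex : ∀ i, ∃ j, j < m ∧ x i ∈ Set.Ico (e j) (e (j + 1)) := by
    intro i
    have hz := hx i
    rw [← ha, ← hb] at hz
    have key : ∀ M, M ≤ m → x i < e M → ∃ j, j < M ∧ x i ∈ Set.Ico (e j) (e (j + 1)) := by
      intro M
      induction M with
      | zero => intro _ hlt; exact absurd (hz.1.trans_lt hlt) (lt_irrefl _)
      | succ M ih =>
        intro hMm hlt
        rcases le_or_gt (e M) (x i) with h | h
        · exact ⟨M, Nat.lt_succ_self M, ⟨h, hlt⟩⟩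
        · obtain ⟨j, hj, hmem⟩ := ih (Nat.le_of_succ_le hMm) h
          exact ⟨j, hj.trans (Nat.lt_succ_self M), hmem⟩
    exact key m le_rfl hz.2
  -- the bin index
  set J : Fin n → ℕ := fun i => Classical.choose (hex i) with hJdef
  have hJ : ∀ i, J i < m ∧ x i ∈ Set.Ico (e (J i)) (e (J i + 1)) :=
    fun i => Classical.choose_spec (hex i)
  have hxiff : ∀ i j, j < m → (x i ∈ Set.Ico (e j) (e (j + 1)) ↔ J i = j) := by
    intro i j hj
    constructor
    · intro hmem
      exact hdisj (x i) (J i) j (hJ i).1 hj (hJ i).2 hmem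
    · intro h; rw [← h]; exact (hJ i).2
  -- kernel as indicator
  have hK : ∀ i y, histKernel m e (x i) y =
      if y ∈ Set.Ico (e (J i)) (e (J i + 1)) then (e (J i + 1) - e (J i))⁻¹ else 0 := by
    intro i y
    unfold histKernel
    rw [Finset.sum_eq_single (J i)]
    · simp [(hJ i).2]
    · intro j hjmem hne
      have : ¬ x i ∈ Set.Ico (e j) (e (j + 1)) := by
        intro hmem
        exact hne ((hxiff i j (Finset.mem_range.mp hjmem)).mp hmem).symm
      simp [this]
    · intro h; exact absurd (Finset.mem_range.mpr (hJ i).1) h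
  -- counts
  set N : ℕ → ℕ := fun j => (Finset.univ.filter (fun i => x i ∈ Set.Ico (e j) (e (j + 1)))).card
    with hNdef
  have hfilter_eq : ∀ j, j < m →
      Finset.univ.filter (fun i => x i ∈ Set.Ico (e j) (e (j + 1)))
        = Finset.univ.filter (fun i => J i = j) := by
    intro j hj
    apply Finset.filter_congr
    intro i _
    simp [hxiff i j hj]
  -- sum of kernels at a point of bin j
  have hsum : ∀ (y : ℝ) j, j < m → y ∈ Set.Ico (e j) (e (j + 1)) →
      (∑ i', histKernel m e (x i') y) = (N j : ℝ) * (e (j + 1) - e j)⁻¹ := by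
    intro y j hj hy
    have : ∀ i', histKernel m e (x i') y
        = if J i' = j then (e (j + 1) - e j)⁻¹ else 0 := by
      intro i'
      rw [hK]
      by_cases h : y ∈ Set.Ico (e (J i')) (e (J i' + 1))
      · have hJeq : J i' = j := hdisj y (J i') j (hJ i').1 hj h hy
        rw [if_pos h, hJeq, if_pos rfl]
      · have hne : J i' ≠ j := by
          intro hEq; rw [hEq] at h; exact h hy
        simp [h, hne]
    rw [Finset.sum_congr rfl (fun i' _ => this i'), ← Finset.sum_filter,
      Finset.sum_const, ← hfilter_eq j hj, nsmul_eq_mul]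
  -- value of each integral
  have hint : ∀ i, (∫ y : ℝ, (histKernel m e (x i) y) ^ 2
        / ((1 / (n : ℝ)) * ∑ i', histKernel m e (x i') y))
      = (n : ℝ) / (N (J i)) := by
    intro i
    set j := J i with hj
    have hjm : j < m := (hJ i).1
    have hpos : 0 < e (j + 1) - e j := sub_pos.mpr (hmono j hjm)
    have hNpos : 0 < N j := by
      rw [hNdef]
      exact Finset.card_pos.mpr ⟨i, Finset.mem_filter.mpr ⟨Finset.mem_univ i, (hJ i).2⟩⟩
    have hfun : (fun y : ℝ => (histKernel m e (x i) y) ^ 2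
          / ((1 / (n : ℝ)) * ∑ i', histKernel m e (x i') y))
        = (Set.Ico (e j) (e (j + 1))).indicator
            (fun _ => (n : ℝ) / ((N j : ℝ) * (e (j + 1) - e j))) := by
      funext y
      by_cases hy : y ∈ Set.Ico (e j) (e (j + 1))
      · rw [Set.indicator_of_mem hy, hK, if_pos hy, hsum y j hjm hy, ← hj]
        have h1 : (e (j + 1) - e j) ≠ 0 := ne_of_gt hpos
        have h2 : (N j : ℝ) ≠ 0 := Nat.cast_ne_zero.mpr hNpos.ne'
        have h3 : (n : ℝ) ≠ 0 := Nat.cast_ne_zero.mpr hn.ne'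
        field_simp
      · rw [Set.indicator_of_notMem hy, hK, if_neg hy]
        simp
    rw [hfun, integral_indicator_const _ measurableSet_Ico, Real.volume_real_Ico_of_le (hmono j hjm).le, smul_eq_mul]
    have h1 : (e (j + 1) - e j) ≠ 0 := ne_of_gt hpos
    have h2 : (N j : ℝ) ≠ 0 := Nat.cast_ne_zero.mpr hNpos.ne'
    field_simp
  rw [Finset.sum_congr rfl (fun i _ => hint i)]
  -- regroup the sum by bins
  have hgroup : (∑ i, (n : ℝ) / (N (J i)))
      = ∑ j ∈ Finset.range m, ∑ i ∈ Finset.univ.filter (fun i => J i = j),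
          (n : ℝ) / (N (J i)) := by
    exact (Finset.sum_fiberwise_of_maps_to
      (fun i _ => Finset.mem_range.mpr (hJ i).1) _).symm
  rw [hgroup]
  have hinner : ∀ j ∈ Finset.range m,
      (∑ i ∈ Finset.univ.filter (fun i => J i = j), (n : ℝ) / (N (J i)))
        = if N j ≠ 0 then (n : ℝ) else 0 := by
    intro j hjm
    have : ∀ i ∈ Finset.univ.filter (fun i => J i = j),
        (n : ℝ) / (N (J i)) = (n : ℝ) / (N j) := by
      intro i hi
      rw [Finset.mem_filter] at hi
      rw [hi.2]
    rw [Finset.sum_congr rfl this, Finset.sum_const, ← hfilter_eq j (Finset.mem_range.mp hjm),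
      nsmul_eq_mul]
    show (N j : ℝ) * ((n : ℝ) / (N j)) = _
    by_cases hN : N j = 0
    · simp [hN]
    · have h2 : (N j : ℝ) ≠ 0 := Nat.cast_ne_zero.mpr hN
      rw [if_pos hN]
      field_simp
  rw [Finset.sum_congr rfl hinner, ← Finset.sum_filter, Finset.sum_const, nsmul_eq_mul]
  have hfilter2 : (Finset.range m).filter (fun j => N j ≠ 0)
      = (Finset.range m).filter (fun j => ∃ i, x i ∈ Set.Ico (e j) (e (j + 1))) := by
    apply Finset.filter_congr
    intro j _
    constructor
    · intro h
      obtain ⟨i, hi⟩ := Finset.card_pos.mp (Nat.pos_of_ne_zero h)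
      exact ⟨i, (Finset.mem_filter.mp hi).2⟩
    · rintro ⟨i, hi⟩
      exact (Finset.card_pos.mpr ⟨i, Finset.mem_filter.mpr ⟨Finset.mem_univ i, hi⟩⟩).ne'
  rw [hfilter2]
  have h3 : (n : ℝ) ≠ 0 := Nat.cast_ne_zero.mpr hn.ne'
  field_simp
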